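/- For every t with 1/4 ≤ t ≤ 3/4, one has −(2t−1)^4/12 − (2t−1)^6/30 − 2^{17}(2t−1)^8/8! ≤ J(t) − log 2 ≤ −(2t−1)^4/12 − (2t−1)^6/30. -/
import Mathlib


/-- The entropy-like function `I(t) = (t-1) log(1-t) - t log t`. -/
noncomputable def Ifun (t : ℝ) : ℝ := (t - 1) * Real.log (1 - t) - t * Real.log t

/-- `J(t) = I(t) + (2t-1)²/2`. -/
noncomputable def Jfun (t : ℝ) : ℝ := Ifun t + (2 * t - 1) ^ 2 / 2

/-- Taylor-type estimate for `log (1 - s)` on `[-1/2, 1/2]`. -/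
lemma log_one_sub_est (s : ℝ) (h1 : -(1/2:ℝ) ≤ s) (h2 : s ≤ 1/2) :
    ∃ E : ℝ, |E| ≤ 2 * s ^ 16 ∧
      Real.log (1 - s) = -(s + s^2/2 + s^3/3 + s^4/4 + s^5/5 + s^6/6 + s^7/7 + s^8/8 + s^9/9
        + s^10/10 + s^11/11 + s^12/12 + s^13/13 + s^14/14 + s^15/15) + E := by
  have habs : |s| ≤ 1/2 := abs_le.2 ⟨h1, h2⟩
  have hlt : |s| < 1 := lt_of_le_of_lt habs (by norm_num)
  have hEa := Real.abs_log_sub_add_sum_range_le hlt 15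
  simp only [Finset.sum_range_succ, Finset.sum_range_zero] at hEa
  norm_num at hEa
  have h16 : |s| ^ 16 = s ^ 16 := by
    rw [← abs_pow, abs_of_nonneg (by positivity)]
  have hb : |s| ^ 16 / (1 - |s|) ≤ 2 * s ^ 16 := by
    rw [div_le_iff₀ (by linarith [abs_nonneg s])]
    rw [h16]
    nlinarith [pow_nonneg (abs_nonneg s) 16, h16, abs_nonneg s]
  exact ⟨_, hEa.trans hb, by ring⟩

set_option maxHeartbeats 2000000 in
theorem Jfun_taylor_bounds :
    ∀ t : ℝ, 1 / 4 ≤ t → t ≤ 3 / 4 →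
      -(2 * t - 1) ^ 4 / 12 - (2 * t - 1) ^ 6 / 30
          - 2 ^ 17 * (2 * t - 1) ^ 8 / (Nat.factorial 8 : ℝ) ≤ Jfun t - Real.log 2 ∧
      Jfun t - Real.log 2 ≤ -(2 * t - 1) ^ 4 / 12 - (2 * t - 1) ^ 6 / 30 := by
  intro t ht1 ht2
  set s : ℝ := 2 * t - 1 with hsdef
  have hs1 : -(1/2:ℝ) ≤ s := by rw [hsdef]; linarith
  have hs2 : s ≤ 1/2 := by rw [hsdef]; linarith
  have hs1' : -(1/2:ℝ) ≤ -s := by linarith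
  have hs2' : -s ≤ 1/2 := by linarith
  have h1ms : (0:ℝ) < 1 - s := by linarith
  have h1ps : (0:ℝ) < 1 + s := by linarith
  obtain ⟨E1, hE1b, hE1⟩ := log_one_sub_est s hs1 hs2
  obtain ⟨E2, hE2b, hE2⟩ := log_one_sub_est (-s) hs1' hs2'
  rw [sub_neg_eq_add] at hE2
  have hE2b' : |E2| ≤ 2 * s ^ 16 := by
    have : (-s) ^ 16 = s ^ 16 := by ring
    rwa [this] at hE2b
  -- rewrite Jfun t - log 2 in terms of log (1 ± s)
  have hlog1 : Real.log (1 - t) = Real.log (1 - s) - Real.log 2 := by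
    have h : 1 - t = (1 - s) / 2 := by rw [hsdef]; ring
    rw [h, Real.log_div (ne_of_gt h1ms) two_ne_zero]
  have hlog2 : Real.log t = Real.log (1 + s) - Real.log 2 := by
    have h : t = (1 + s) / 2 := by rw [hsdef]; ring
    rw [h, Real.log_div (ne_of_gt h1ps) two_ne_zero]
  have hJ : Jfun t - Real.log 2 =
      s^2/2 - (1 - s)/2 * Real.log (1 - s) - (1 + s)/2 * Real.log (1 + s) := by
    unfold Jfun Ifun
    rw [hlog1, hlog2, ← hsdef, hsdef]
    ring
  rw [hJ, hE1, hE2]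
  -- bounds on errors
  obtain ⟨hE1l, hE1u⟩ := abs_le.1 hE1b
  obtain ⟨hE2l, hE2u⟩ := abs_le.1 hE2b'
  have c1 : (0:ℝ) ≤ (1 - s) * (2 * s ^ 16 - E1) := mul_nonneg (by linarith) (by linarith)
  have c2 : (0:ℝ) ≤ (1 - s) * (2 * s ^ 16 + E1) := mul_nonneg (by linarith) (by linarith)
  have c3 : (0:ℝ) ≤ (1 + s) * (2 * s ^ 16 - E2) := mul_nonneg (by linarith) (by linarith)
  have c4 : (0:ℝ) ≤ (1 + s) * (2 * s ^ 16 + E2) := mul_nonneg (by linarith) (by linarith)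
  -- power estimates
  have hsq : s ^ 2 ≤ 1/4 := by nlinarith
  have h8n : (0:ℝ) ≤ s ^ 8 := by positivity
  have h10n : (0:ℝ) ≤ s ^ 10 := by positivity
  have h12n : (0:ℝ) ≤ s ^ 12 := by positivity
  have h14n : (0:ℝ) ≤ s ^ 14 := by positivity
  have e10 : s ^ 10 ≤ s ^ 8 * (1/4) := by
    calc s ^ 10 = s ^ 8 * s ^ 2 := by ring
    _ ≤ s ^ 8 * (1/4) := mul_le_mul_of_nonneg_left hsq h8n
  have e12 : s ^ 12 ≤ s ^ 10 * (1/4) := by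
    calc s ^ 12 = s ^ 10 * s ^ 2 := by ring
    _ ≤ s ^ 10 * (1/4) := mul_le_mul_of_nonneg_left hsq h10n
  have e14 : s ^ 14 ≤ s ^ 12 * (1/4) := by
    calc s ^ 14 = s ^ 12 * s ^ 2 := by ring
    _ ≤ s ^ 12 * (1/4) := mul_le_mul_of_nonneg_left hsq h12n
  have e16 : s ^ 16 ≤ s ^ 14 * (1/4) := by
    calc s ^ 16 = s ^ 14 * s ^ 2 := by ring
    _ ≤ s ^ 14 * (1/4) := mul_le_mul_of_nonneg_left hsq h14n
  have hfact : (Nat.factorial 8 : ℝ) = 40320 := by norm_num [Nat.factorial]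
  rw [hfact]
  clear_value s
  clear hsdef hJ hE1 hE2 hlog1 hlog2 hE1b hE2b hE2b'
  ring_nf
  constructor
  · linarith [c1, c3, e10, e12, e14, e16, h8n, h10n, h12n, h14n]
  · linarith [c2, c4, e10, e12, e14, e16, h8n, h10n, h12n, h14n]
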